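/- Any quantum circuit with coupling graph L(G), containing λ two-qubit gates, can be routed to hardware with coupling graph heavy(G) with a SWAP overhead of at most 2λ. Formally: if for every edge {i,j} of L(G) there is a vertex m of heavy(G) adjacent to both i and j, then replacing each two-qubit gate U_{ij} by SWAP_{mi} · U_{mj} · SWAP_{im} yields a sequence of gates each acting along an edge of heavy(G), with exactly 2λ SWAP gates inserted, computing the same unitary on the heavy-node qubits. -/

import Mathlib

open SimpleGraph

/-- The SWAP gate on two qubits, as a matrix in the computational basis. -/
def swapMat : Matrix (Fin 2 × Fin 2) (Fin 2 × Fin 2) ℂ :=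
  fun p q => if p.1 = q.2 ∧ p.2 = q.1 then 1 else 0

/-- A two-qubit gate `U` applied to qubits `a` and `b` of a register of qubits indexed
by `β`, acting as the identity on all other qubits. -/
def gateOn {β : Type*} [DecidableEq β] [Fintype β]
    (U : Matrix (Fin 2 × Fin 2) (Fin 2 × Fin 2) ℂ) (a b : β) :
    Matrix (β → Fin 2) (β → Fin 2) ℂ :=
  fun x y => (if ∀ c, c ≠ a → c ≠ b → x c = y c then 1 else 0) * U (x a, x b) (y a, y b)

lemma gateOn_swap {β : Type*} [DecidableEq β] [Fintype β] (a b : β) (hab : a ≠ b)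
    (x y : β → Fin 2) :
    gateOn swapMat a b x y = if y = x ∘ (Equiv.swap a b) then 1 else 0 := by
  unfold gateOn swapMat
  by_cases h : y = x ∘ (Equiv.swap a b)
  · subst h
    simp only [Function.comp_apply, Equiv.swap_apply_left, Equiv.swap_apply_right, if_pos rfl]
    rw [if_pos, if_pos] <;> simp_all [Equiv.swap_apply_of_ne_of_ne]
  · rw [if_neg h]
    by_cases h1 : ∀ c, c ≠ a → c ≠ b → x c = y c
    · by_cases h2 : x a = y b ∧ x b = y a
      · exfalso; apply h; funext c
        rcases eq_or_ne c a with rfl | ha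
        · simp [h2.2.symm]
        rcases eq_or_ne c b with rfl | hb
        · simp [h2.1.symm]
        · simp [Equiv.swap_apply_of_ne_of_ne ha hb, (h1 c ha hb).symm]
      · rw [if_neg h2, mul_zero]
    · rw [if_neg h1, zero_mul]

lemma conj_swap {β : Type*} [DecidableEq β] [Fintype β]
    (U : Matrix (Fin 2 × Fin 2) (Fin 2 × Fin 2) ℂ) (i m j : β)
    (him : i ≠ m) (hmj : m ≠ j) (hij : i ≠ j) :
    gateOn swapMat i m * (gateOn U m j * gateOn swapMat i m) = gateOn U i j := by
  set σ := Equiv.swap i m with hσ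
  have key : ∀ x z : β → Fin 2, gateOn swapMat i m x z = if z = x ∘ σ then 1 else 0 :=
    gateOn_swap i m him
  ext x y
  rw [Matrix.mul_apply]
  have step1 : ∀ z : β → Fin 2,
      gateOn swapMat i m x z * (gateOn U m j * gateOn swapMat i m) z y
      = if z = x ∘ σ then (gateOn U m j * gateOn swapMat i m) z y else 0 := by
    intro z; rw [key]; split <;> simp
  rw [Finset.sum_congr rfl (fun z _ => step1 z), Finset.sum_ite_eq' Finset.univ (x ∘ ⇑σ)
    (fun z => (gateOn U m j * gateOn swapMat i m) z y)]
  simp only [Finset.mem_univ, if_pos]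
  rw [Matrix.mul_apply]
  have step2 : ∀ z : β → Fin 2,
      gateOn U m j (x ∘ σ) z * gateOn swapMat i m z y
      = if z = y ∘ σ then gateOn U m j (x ∘ σ) z else 0 := by
    intro z
    rw [key]
    have : (y = z ∘ ⇑σ) ↔ (z = y ∘ ⇑σ) := by
      constructor <;> intro h <;> subst h <;> funext c <;> simp [hσ]
    rw [if_congr this rfl rfl]
    split <;> simp
  rw [Finset.sum_congr rfl (fun z _ => step2 z), Finset.sum_ite_eq' Finset.univ (y ∘ ⇑σ)
    (fun z => gateOn U m j (x ∘ σ) z)]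
  simp only [Finset.mem_univ, if_pos]
  -- now gateOn U m j (x∘σ) (y∘σ) = gateOn U i j x y
  unfold gateOn
  have hσm : σ m = i := Equiv.swap_apply_right i m
  have hσj : σ j = j := Equiv.swap_apply_of_ne_of_ne (Ne.symm hij) (Ne.symm hmj)
  have hinv : ∀ a, σ (σ a) = a := fun a => Equiv.swap_apply_self i m a
  have hσi : σ i = m := Equiv.swap_apply_left i m
  have hcond : (∀ c, c ≠ m → c ≠ j → (x ∘ σ) c = (y ∘ σ) c)
      ↔ (∀ c, c ≠ i → c ≠ j → x c = y c) := by
    constructor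
    · intro h c hci hcj
      have := h (σ c) ?_ ?_
      · simpa [hinv] using this
      · intro hc; apply hci
        have := congrArg σ hc; rw [hinv, hσm] at this; exact this
      · intro hc; apply hcj
        have := congrArg σ hc; rw [hinv, hσj] at this; exact this
    · intro h c hcm hcj
      simp only [Function.comp_apply]
      apply h
      · intro hc; apply hcm
        have := congrArg σ hc; rw [hinv, hσi] at this; exact this
      · intro hc; apply hcj
        have := congrArg σ hc; rw [hinv, hσj] at this; exact this
  rw [if_congr hcond rfl rfl]
  simp [hσm, hσj]

/-- line-graph routing. Let the qubits be indexed by the vertices `β`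
of the hardware coupling graph `H` (playing the role of `heavy(G)`), and let `LG`
(playing the role of `L(G)`) be the coupling graph of the circuit, a graph on the heavy
nodes. Suppose every edge `{i,j}` of `LG` has a mediating vertex `m` adjacent in `H` to
both `i` and `j`. Then any circuit `C` — a list of two-qubit gates, each acting along an
edge of `LG`, with `λ = C.length` two-qubit gates — can be routed: there is a circuit
`R` (gates tagged by a Boolean marking the inserted SWAPs) such that every gate of `R`
acts along an edge of `H`, every tagged gate is a SWAP gate, exactly `2λ` SWAP gates are
inserted, and `R` computes the same unitary on the full register as `C`. -/
theorem line_graph_routing {β : Type*} [DecidableEq β] [Fintype β]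
    (H LG : SimpleGraph β)
    (hmed : ∀ i j : β, LG.Adj i j → ∃ m : β, H.Adj i m ∧ H.Adj m j)
    (C : List (Matrix (Fin 2 × Fin 2) (Fin 2 × Fin 2) ℂ × β × β))
    (hC : ∀ g ∈ C, LG.Adj g.2.1 g.2.2) :
    ∃ R : List (Bool × Matrix (Fin 2 × Fin 2) (Fin 2 × Fin 2) ℂ × β × β),
      (∀ g ∈ R, H.Adj g.2.2.1 g.2.2.2) ∧
      (∀ g ∈ R, g.1 = true → g.2.1 = swapMat) ∧
      R.countP (fun g => g.1) = 2 * C.length ∧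
      (R.map (fun g => gateOn g.2.1 g.2.2.1 g.2.2.2)).prod =
        (C.map (fun g => gateOn g.1 g.2.1 g.2.2)).prod := by
  induction C with
  | nil => exact ⟨[], by simp, by simp, by simp, by simp⟩
  | cons g C ih =>
    obtain ⟨R, hR1, hR2, hR3, hR4⟩ := ih (fun g hg => hC g (List.mem_cons_of_mem _ hg))
    obtain ⟨U, i, j⟩ := g
    have hadj : LG.Adj i j := hC _ List.mem_cons_self
    obtain ⟨m, him, hmj⟩ := hmed i j hadj
    refine ⟨(true, swapMat, i, m) :: (false, U, m, j) :: (true, swapMat, i, m) :: R,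
      ?_, ?_, ?_, ?_⟩
    · intro g hg
      simp only [List.mem_cons] at hg
      rcases hg with rfl | rfl | rfl | hg
      · exact him
      · exact hmj
      · exact him
      · exact hR1 g hg
    · intro g hg ht
      simp only [List.mem_cons] at hg
      rcases hg with rfl | rfl | rfl | hg
      · rfl
      · simp at ht
      · rfl
      · exact hR2 g hg ht
    · simp only [List.countP_cons, List.length_cons, hR3]
      norm_num; ring
    · simp only [List.map_cons, List.prod_cons, hR4, ← mul_assoc]
      rw [mul_assoc (gateOn swapMat i m)]
      rw [conj_swap U i m j him.ne hmj.ne hadj.ne]
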